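/- The f-function is multiplicative under the Zykov join: for finite simple graphs G and H, f_{G+H}(t) = f_G(t) · f_H(t), where f_G(t) = 1 + f_0 t + f_1 t² + ⋯ and f_k is the number of (k+1)-cliques of G. -/

import Mathlib

open SimpleGraph

/-- The Zykov join of two graphs: disjoint union plus all cross edges. -/
def zykovJoin {α β : Type} (G : SimpleGraph α) (H : SimpleGraph β) :
    SimpleGraph (α ⊕ β) where
  Adj x y := (G.sum H).Adj x y ∨ x.isLeft ≠ y.isLeft
  symm := ⟨by
    intro x y h
    rcases h with h | h
    · exact Or.inl ((G.sum H).adj_symm h)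
    · exact Or.inr (Ne.symm h)⟩
  loopless := ⟨by
    intro x h
    rcases h with h | h
    · exact (G.sum H).irrefl h
    · exact h rfl⟩

/-- `fVec G k` is the number of `(k+1)`-cliques of `G`. -/
noncomputable def fVec {α : Type} (G : SimpleGraph α) (k : ℕ) : ℕ :=
  Nat.card {s : Finset α // G.IsNClique (k + 1) s}

open Polynomial in
/-- The f-function `f_G(t) = 1 + f₀ t + f₁ t² + ⋯` of `G`. -/
noncomputable def fPoly {α : Type} (G : SimpleGraph α) : Polynomial ℤ :=
  1 + ∑ k ∈ Finset.range (Nat.card α), (fVec G k : Polynomial ℤ) * X ^ (k + 1)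

/-! ### Auxiliary definitions and lemmas -/

/-- `cc G n` is the number of `n`-cliques of `G`, including the empty clique for `n = 0`. -/
noncomputable def cc {α : Type} (G : SimpleGraph α) (n : ℕ) : ℕ :=
  Nat.card {s : Finset α // G.IsNClique n s}

lemma cc_eq_filter {α : Type} [Fintype α] (G : SimpleGraph α) (n : ℕ)
    [DecidablePred (fun s : Finset α => G.IsNClique n s)] :
    cc G n = (Finset.univ.filter (fun s : Finset α => G.IsNClique n s)).card := by
  classical
  rw [cc, Nat.card_eq_fintype_card, Fintype.card_subtype]

lemma cc_zero {α : Type} (G : SimpleGraph α) : cc G 0 = 1 := by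
  have : Unique {s : Finset α // G.IsNClique 0 s} := by
    refine ⟨⟨⟨∅, by simp [SimpleGraph.isNClique_iff, SimpleGraph.IsClique]⟩⟩, ?_⟩
    rintro ⟨s, hs⟩
    have : s = ∅ := Finset.card_eq_zero.mp hs.2
    simp [this]
  rw [cc, Nat.card_unique]

lemma cc_eq_zero {α : Type} [Fintype α] (G : SimpleGraph α) {n : ℕ}
    (h : Fintype.card α < n) : cc G n = 0 := by
  have : IsEmpty {s : Finset α // G.IsNClique n s} := by
    refine ⟨fun ⟨s, hs⟩ => ?_⟩
    have h2 : n ≤ Fintype.card α := by simpa [hs.2] using s.card_le_univ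
    omega
  rw [cc, Nat.card_of_isEmpty]

lemma zykovJoin_isClique_iff {α β : Type} (G : SimpleGraph α) (H : SimpleGraph β)
    (s : Finset (α ⊕ β)) :
    (zykovJoin G H).IsClique (s : Set (α ⊕ β)) ↔
      G.IsClique (s.toLeft : Set α) ∧ H.IsClique (s.toRight : Set β) := by
  constructor
  · intro hs
    constructor
    · intro a ha b hb hab
      have h := hs (by simpa using ha) (by simpa using hb) (by simp [hab])
      rcases h with h | h
      · exact h
      · simp at h
    · intro a ha b hb hab
      have h := hs (by simpa using ha) (by simpa using hb) (by simp [hab])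
      rcases h with h | h
      · exact h
      · simp at h
  · rintro ⟨h1, h2⟩ x hx y hy hxy
    cases x with
    | inl a =>
      cases y with
      | inl b =>
        exact Or.inl (h1 (by simpa using hx) (by simpa using hy) (by simpa using hxy))
      | inr b => exact Or.inr (by simp)
    | inr a =>
      cases y with
      | inl b => exact Or.inr (by simp)
      | inr b =>
        exact Or.inl (h2 (by simpa using hx) (by simpa using hy) (by simpa using hxy))

lemma cc_zykovJoin {α β : Type} [Fintype α] [Fintype β]
    (G : SimpleGraph α) (H : SimpleGraph β) (n : ℕ) :
    cc (zykovJoin G H) n = ∑ x ∈ Finset.HasAntidiagonal.antidiagonal n, cc G x.1 * cc H x.2 := by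
  classical
  simp only [cc_eq_filter]
  simp only [← Finset.card_product]
  rw [← Finset.card_sigma]
  refine Finset.card_nbij'
    (fun s => ⟨(s.toLeft.card, s.toRight.card), (s.toLeft, s.toRight)⟩)
    (fun p => p.2.1.disjSum p.2.2) ?_ ?_ ?_ ?_
  · intro s hs
    simp only [Finset.mem_coe, Finset.mem_filter, Finset.mem_univ, true_and] at hs
    have hc := (zykovJoin_isClique_iff G H s).mp hs.1
    simp only [Finset.mem_coe, Finset.mem_sigma, Finset.HasAntidiagonal.mem_antidiagonal, Finset.mem_product,
      Finset.mem_filter, Finset.mem_univ, true_and]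
    refine ⟨?_, ⟨hc.1, rfl⟩, ⟨hc.2, rfl⟩⟩
    rw [Finset.card_toLeft_add_card_toRight, hs.2]
  · rintro ⟨⟨i, j⟩, a, b⟩ hp
    simp only [Finset.mem_coe, Finset.mem_sigma, Finset.HasAntidiagonal.mem_antidiagonal, Finset.mem_product,
      Finset.mem_filter, Finset.mem_univ, true_and] at hp
    obtain ⟨hij, ⟨ha, hac⟩, hb, hbc⟩ := hp
    simp only [Finset.mem_coe, Finset.mem_filter, Finset.mem_univ, true_and]
    constructor
    · rw [zykovJoin_isClique_iff]
      simpa using ⟨ha, hb⟩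
    · rw [Finset.card_disjSum, hac, hbc, hij]
  · intro s _
    simp [Finset.toLeft_disjSum_toRight]
  · rintro ⟨⟨i, j⟩, a, b⟩ hp
    simp only [Finset.mem_coe, Finset.mem_sigma, Finset.HasAntidiagonal.mem_antidiagonal, Finset.mem_product,
      Finset.mem_filter, Finset.mem_univ, true_and] at hp
    obtain ⟨hij, ⟨ha, hac⟩, hb, hbc⟩ := hp
    simp [hac, hbc]

open Polynomial in
lemma fPoly_eq {α : Type} [Fintype α] (G : SimpleGraph α) :
    fPoly G = ∑ n ∈ Finset.range (Fintype.card α + 1), C ((cc G n : ℤ)) * X ^ n := by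
  have hf : ∀ k, fVec G k = cc G (k + 1) := fun k => rfl
  rw [fPoly, Finset.sum_range_succ', Nat.card_eq_fintype_card]
  simp [hf, cc_zero, add_comm, map_natCast]

lemma coeff_fPoly {α : Type} [Fintype α] (G : SimpleGraph α) (n : ℕ) :
    (fPoly G).coeff n = (cc G n : ℤ) := by
  rw [fPoly_eq, Polynomial.finset_sum_coeff]
  simp only [Polynomial.coeff_C_mul, Polynomial.coeff_X_pow, mul_ite, mul_one, mul_zero]
  rw [Finset.sum_ite_eq]
  split_ifs with h
  · rfl
  · rw [cc_eq_zero G (by simp only [Finset.mem_range, not_lt] at h; omega), Nat.cast_zero]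

/-- The f-function is multiplicative under the Zykov join:
`f_{G+H}(t) = f_G(t) * f_H(t)`. -/
theorem fPoly_zykovJoin {α β : Type} [Fintype α] [Fintype β]
    (G : SimpleGraph α) (H : SimpleGraph β) :
    fPoly (zykovJoin G H) = fPoly G * fPoly H := by
  ext n
  rw [Polynomial.coeff_mul]
  simp only [coeff_fPoly]
  rw [cc_zykovJoin]
  push_cast
  rfl
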